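/- Let k ≥ 3 be odd and let G be a graph with at least C(k,2) + 1 edges. Then G contains an induced subgraph on k+1 vertices with minimum degree at least 1. -/

import Mathlib

open SimpleGraph

/-- `H` contains a copy of `G`, i.e. there is an injective graph homomorphism `G →g H`. -/
def ContainsCopy {α β : Type*} (G : SimpleGraph α) (H : SimpleGraph β) : Prop :=
  ∃ f : G →g H, Function.Injective f

/-- `F ⟶ (G, H)` : for every red-blue colouring of the edges of `F` (encoded by the red
subgraph `R ≤ F`, the blue edges being `F \ R`) there is a red copy of `G` or a blue copy
of `H`. -/
def Arrows {γ α β : Type*} (F : SimpleGraph γ) (G : SimpleGraph α) (H : SimpleGraph β) : Prop :=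
  ∀ R : SimpleGraph γ, R ≤ F → ContainsCopy G R ∨ ContainsCopy H (F \ R)

/-- The Ramsey number `r(G, H)` : the least `n` such that `K_n ⟶ (G, H)`. -/
noncomputable def ramseyNumber {α β : Type*} (G : SimpleGraph α) (H : SimpleGraph β) : ℕ :=
  sInf {n : ℕ | Arrows (⊤ : SimpleGraph (Fin n)) G H}

/-- The size Ramsey number `r̂(G, H)` : the least number of edges of a graph `F` with
`F ⟶ (G, H)`. -/
noncomputable def sizeRamsey {α β : Type*} (G : SimpleGraph α) (H : SimpleGraph β) : ℕ :=
  sInf {m : ℕ | ∃ (N : ℕ) (F : SimpleGraph (Fin N)), Arrows F G H ∧ F.edgeSet.ncard = m}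

/-- The restricted size Ramsey number `r̂*(G, H)` : the least number of edges of a graph `F`
on exactly `r(G, H)` vertices with `F ⟶ (G, H)`. -/
noncomputable def restrictedSizeRamsey {α β : Type*} (G : SimpleGraph α) (H : SimpleGraph β) : ℕ :=
  sInf {m : ℕ | ∃ F : SimpleGraph (Fin (ramseyNumber G H)),
    Arrows F G H ∧ F.edgeSet.ncard = m}

/-- The star `K_{1,k}` with `k` edges. -/
def starGraph (k : ℕ) : SimpleGraph (Fin 1 ⊕ Fin k) := completeBipartiteGraph (Fin 1) (Fin k)


section Aux
variable {V : Type*} [DecidableEq V]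

def sym2Finset : Sym2 V → Finset V :=
  Sym2.lift ⟨fun a b => ({a, b} : Finset V), fun a b => Finset.pair_comm a b⟩

@[simp] lemma sym2Finset_mk (a b : V) : sym2Finset s(a, b) = {a, b} := rfl

lemma sym2Finset_injOn (e₁ e₂ : Sym2 V) (h1 : ¬ e₁.IsDiag)
    (h : sym2Finset e₁ = sym2Finset e₂) : e₁ = e₂ := by
  induction e₁ using Sym2.ind with
  | _ a b =>
  induction e₂ using Sym2.ind with
  | _ c d =>
  simp only [sym2Finset_mk] at h
  have ha : a ∈ ({c, d} : Finset V) := h ▸ (by simp)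
  have hb : b ∈ ({c, d} : Finset V) := h ▸ (by simp)
  have hc : c ∈ ({a, b} : Finset V) := h ▸ (by simp)
  simp only [Finset.mem_insert, Finset.mem_singleton] at ha hb hc
  have hab : a ≠ b := by simpa using h1
  rw [Sym2.eq_iff]
  rcases ha with rfl | rfl
  · rcases hb with rfl | rfl
    · simp at hab
    · tauto
  · rcases hb with rfl | rfl
    · tauto
    · simp at hab

/-- edge count is at most `C(|support|, 2)`. -/
lemma edge_count_le_support [Fintype V] (G : SimpleGraph V) [DecidableRel G.Adj]
    (S : Finset V) (hS : ∀ a b : V, G.Adj a b → a ∈ S) :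
    G.edgeFinset.card ≤ S.card.choose 2 := by
  have := Finset.card_le_card_of_injOn (f := sym2Finset)
    (s := G.edgeFinset) (t := S.powersetCard 2) ?_ ?_
  · simpa [Finset.card_powersetCard] using this
  · intro e he
    rw [Finset.mem_coe, SimpleGraph.mem_edgeFinset] at he
    induction e using Sym2.ind with
    | _ a b =>
    rw [SimpleGraph.mem_edgeSet] at he
    rw [Finset.mem_coe, Finset.mem_powersetCard]
    constructor
    · intro x hx
      simp only [sym2Finset_mk, Finset.mem_insert, Finset.mem_singleton] at hx
      rcases hx with rfl | rfl
      · exact hS _ _ he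
      · exact hS _ _ he.symm
    · simp [sym2Finset_mk, Finset.card_insert_of_notMem, he.ne]
  · intro e₁ he₁ e₂ _ h
    exact sym2Finset_injOn e₁ e₂ (SimpleGraph.not_isDiag_of_mem_edgeSet G
      (by simpa using he₁)) h

end Aux

theorem stmt10 {V : Type*} [Fintype V] (k : ℕ) (hk : 3 ≤ k) (hodd : Odd k)
    (G : SimpleGraph V) (hG : k.choose 2 + 1 ≤ G.edgeSet.ncard) :
    ∃ X : Set V, X.ncard = k + 1 ∧ ∀ v ∈ X, ∃ u ∈ X, G.Adj v u := by
  classical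
  -- support
  set S : Finset V := Finset.univ.filter (fun v => ∃ u, G.Adj v u) with hSdef
  have hSmem : ∀ a b : V, G.Adj a b → a ∈ S := by
    intro a b hab; simp [hSdef]; exact ⟨b, hab⟩
  have hecard : G.edgeSet.ncard = G.edgeFinset.card := by
    rw [← SimpleGraph.coe_edgeFinset, Set.ncard_coe_finset]
  have hSbig : k + 1 ≤ S.card := by
    by_contra hcon
    push_neg at hcon
    have h1 : G.edgeFinset.card ≤ S.card.choose 2 := edge_count_le_support G S hSmem
    have h2 : S.card.choose 2 ≤ k.choose 2 := Nat.choose_le_choose 2 (by omega)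
    omega
  -- maximal matching as a finset of ordered pairs
  set P : Finset (V × V) → Prop := fun M =>
    (∀ p ∈ M, G.Adj p.1 p.2) ∧
    (∀ p ∈ M, ∀ q ∈ M, p ≠ q →
      Disjoint ({p.1, p.2} : Finset V) ({q.1, q.2} : Finset V)) with hPdef
  set coll : Finset (Finset (V × V)) := Finset.univ.filter P with hcoll
  have hcollne : coll.Nonempty := ⟨∅, by simp [hcoll, hPdef]⟩
  obtain ⟨M, hMmem, hMmax⟩ := Finset.exists_max_image coll Finset.card hcollne
  have hMP : P M := by simpa [hcoll] using hMmem
  obtain ⟨hMadj, hMdisj⟩ := hMP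
  set U : Finset V := M.biUnion (fun p => {p.1, p.2}) with hUdef
  have hUcard : U.card = 2 * M.card := by
    rw [hUdef, Finset.card_biUnion hMdisj]
    rw [Finset.sum_congr rfl (fun p hp => ?_), Finset.sum_const, smul_eq_mul, mul_comm]
    exact Finset.card_insert_of_notMem (by simpa using (hMadj p hp).ne) |>.trans (by simp)
  have hUmem : ∀ v, v ∈ U ↔ ∃ p ∈ M, v = p.1 ∨ v = p.2 := by
    intro v; simp [hUdef]
  -- maximality: every edge touches U
  have hmaxedge : ∀ a b, G.Adj a b → a ∈ U ∨ b ∈ U := by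
    intro a b hab
    by_contra hcon
    push_neg at hcon
    obtain ⟨haU, hbU⟩ := hcon
    have hnotmem : (a, b) ∉ M := by
      intro hmem
      exact haU ((hUmem a).2 ⟨(a, b), hmem, Or.inl rfl⟩)
    have hins : insert (a, b) M ∈ coll := by
      simp only [hcoll, Finset.mem_filter, Finset.mem_univ, true_and, hPdef]
      constructor
      · intro p hp
        rcases Finset.mem_insert.1 hp with rfl | hp
        · exact hab
        · exact hMadj p hp
      · intro p hp q hq hpq
        rcases Finset.mem_insert.1 hp with rfl | hp <;>
          rcases Finset.mem_insert.1 hq with rfl | hq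
        · exact absurd rfl hpq
        · refine Finset.disjoint_left.2 ?_
          intro x hx hx2
          have hxU : x ∈ U := (hUmem x).2 ⟨q, hq, by
            simpa [Finset.mem_insert, Finset.mem_singleton] using hx2⟩
          simp only [Finset.mem_insert, Finset.mem_singleton] at hx
          rcases hx with rfl | rfl
          · exact haU hxU
          · exact hbU hxU
        · refine Finset.disjoint_right.2 ?_
          intro x hx hx2
          have hxU : x ∈ U := (hUmem x).2 ⟨p, hp, by
            simpa [Finset.mem_insert, Finset.mem_singleton] using hx2⟩
          simp only [Finset.mem_insert, Finset.mem_singleton] at hx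
          rcases hx with rfl | rfl
          · exact haU hxU
          · exact hbU hxU
        · exact hMdisj p hp q hq hpq
    have : (insert (a, b) M).card ≤ M.card := hMmax _ hins
    rw [Finset.card_insert_of_notMem hnotmem] at this
    omega
  -- partner property for vertices of U
  have hUpartner : ∀ v ∈ U, ∃ u ∈ U, G.Adj v u := by
    intro v hv
    obtain ⟨p, hp, hvp⟩ := (hUmem v).1 hv
    rcases hvp with rfl | rfl
    · exact ⟨p.2, (hUmem p.2).2 ⟨p, hp, Or.inr rfl⟩, hMadj p hp⟩
    · exact ⟨p.1, (hUmem p.1).2 ⟨p, hp, Or.inl rfl⟩, (hMadj p hp).symm⟩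
  by_cases hcase : k + 1 ≤ U.card
  · -- take (k+1)/2 matching edges
    obtain ⟨j, hj⟩ := hodd
    have hjM : j + 1 ≤ M.card := by omega
    obtain ⟨M', hM'sub, hM'card⟩ := Finset.exists_subset_card_eq hjM
    set X : Finset V := M'.biUnion (fun p => {p.1, p.2}) with hXdef
    refine ⟨↑X, ?_, ?_⟩
    · rw [Set.ncard_coe_finset, hXdef,
        Finset.card_biUnion (fun p hp q hq => hMdisj p (hM'sub hp) q (hM'sub hq))]
      have h2 : ∀ p ∈ M', ({p.1, p.2} : Finset V).card = 2 := fun p hp =>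
        (Finset.card_insert_of_notMem
          (by simpa using (hMadj p (hM'sub hp)).ne)).trans (by simp)
      rw [Finset.sum_congr rfl h2, Finset.sum_const, smul_eq_mul, hM'card]; omega
    · intro v hv
      rw [Finset.mem_coe, hXdef, Finset.mem_biUnion] at hv
      obtain ⟨p, hp, hvp⟩ := hv
      simp only [Finset.mem_insert, Finset.mem_singleton] at hvp
      rcases hvp with rfl | rfl
      · exact ⟨p.2, by
          simp only [Finset.mem_coe, hXdef, Finset.mem_biUnion]
          exact ⟨p, hp, by simp⟩, hMadj p (hM'sub hp)⟩
      · exact ⟨p.1, by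
          simp only [Finset.mem_coe, hXdef, Finset.mem_biUnion]
          exact ⟨p, hp, by simp⟩, (hMadj p (hM'sub hp)).symm⟩
  · push_neg at hcase
    -- U.card ≤ k; add support vertices outside U
    have hW : k + 1 - U.card ≤ (S \ U).card := by
      have := Finset.card_le_card_sdiff_add_card (s := S) (t := U)
      omega
    obtain ⟨W', hW'sub, hW'card⟩ := Finset.exists_subset_card_eq hW
    have hdisj : Disjoint U W' := by
      refine Finset.disjoint_right.2 fun x hx => ?_
      exact (Finset.mem_sdiff.1 (hW'sub hx)).2
    refine ⟨↑(U ∪ W'), ?_, ?_⟩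
    · rw [Set.ncard_coe_finset, Finset.card_union_of_disjoint hdisj, hW'card]
      omega
    · intro v hv
      rw [Finset.mem_coe, Finset.mem_union] at hv
      rcases hv with hv | hv
      · obtain ⟨u, hu, hadj⟩ := hUpartner v hv
        exact ⟨u, by simp [Finset.mem_union, hu], hadj⟩
      · have hvS : v ∈ S := (Finset.mem_sdiff.1 (hW'sub hv)).1
        have hvnU : v ∉ U := (Finset.mem_sdiff.1 (hW'sub hv)).2
        simp only [hSdef, Finset.mem_filter] at hvS
        obtain ⟨-, u, hadj⟩ := hvS
        have huU : u ∈ U := by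
          rcases hmaxedge v u hadj with h | h
          · exact absurd h hvnU
          · exact h
        exact ⟨u, by simp [Finset.mem_union, huU], hadj⟩
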